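/- arXiv:2401.06980 — 3 statements merged into one kernel-verified Lean document; each statement's English description precedes it below -/
import Mathlib

section
/- Let Φ and Θ be finite-dimensional real inner product spaces. Let f : Φ × Θ → ℝ and g : Θ → ℝ be differentiable, suppose g attains its infimum g* = inf_θ g(θ), suppose g satisfies the PL inequality with constant μ > 0 (‖∇g(θ)‖² ≥ (1/μ)(g(θ) - g*) for all θ), and suppose for every φ the map θ ↦ f(φ, θ) is L-Lipschitz (L > 0). Fix δ > 0 and a penalty constant γ ≥ L √(3 μ / δ), and set F_γ(φ, θ) = f(φ, θ) + γ g(θ). If (φ_γ, θ_γ) is a global minimizer of F_γ over Φ × Θ, then with ε_γ := g(θ_γ) - g* one has: (a) ε_γ ≤ δ, and (b) (φ_γ, θ_γ) is a global solution of the constrained problem min f(φ, θ) subject to g(θ) - g* ≤ ε_γ; that is, f(φ_γ, θ_γ) ≤ f(φ, θ) for every (φ, θ) with g(θ) - g* ≤ ε_γ. -/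
private lemma penalized_aux_arith (μ L δ γ n ε : ℝ) (hμ : 0 < μ) (hL : 0 < L) (hδ : 0 < δ)
    (hγ0 : 0 < γ) (hγ : L * Real.sqrt (3 * μ / δ) ≤ γ) (hn0 : 0 ≤ n)
    (hγn : γ * n ≤ L) (hPL : 1 / μ * ε ≤ n ^ 2) : ε ≤ δ := by
  have hs : Real.sqrt (3 * μ / δ) ^ 2 = 3 * μ / δ :=
    Real.sq_sqrt (by positivity)
  have h1 : (L * Real.sqrt (3 * μ / δ)) ^ 2 ≤ γ ^ 2 :=
    pow_le_pow_left₀ (by positivity) hγ 2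
  have h2 : (γ * n) ^ 2 ≤ L ^ 2 :=
    pow_le_pow_left₀ (mul_nonneg hγ0.le hn0) hγn 2
  have hε : ε ≤ μ * n ^ 2 := by
    have := mul_le_mul_of_nonneg_left hPL hμ.le
    have hμne : μ ≠ 0 := hμ.ne'
    calc ε = μ * (1 / μ * ε) := by field_simp
    _ ≤ μ * n ^ 2 := this
  have h3 : ε * γ ^ 2 ≤ μ * L ^ 2 := by
    calc ε * γ ^ 2 ≤ μ * n ^ 2 * γ ^ 2 :=
          mul_le_mul_of_nonneg_right hε (sq_nonneg γ)
    _ = μ * (γ * n) ^ 2 := by ring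
    _ ≤ μ * L ^ 2 := mul_le_mul_of_nonneg_left h2 hμ.le
  have h4 : 3 * μ * L ^ 2 ≤ δ * γ ^ 2 := by
    have h5 : L ^ 2 * (3 * μ / δ) ≤ γ ^ 2 := by
      calc L ^ 2 * (3 * μ / δ) = (L * Real.sqrt (3 * μ / δ)) ^ 2 := by rw [mul_pow, hs]
      _ ≤ γ ^ 2 := h1
    have := mul_le_mul_of_nonneg_left h5 hδ.le
    calc 3 * μ * L ^ 2 = δ * (L ^ 2 * (3 * μ / δ)) := by field_simp
    _ ≤ δ * γ ^ 2 := this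
  have hμL2 : 0 < μ * L ^ 2 := by positivity
  have h6 : ε * γ ^ 2 ≤ δ * γ ^ 2 := by linarith
  exact le_of_mul_le_mul_right h6 (pow_pos hγ0 2)

/-- **Lemma 1 (global-solution case, equivalence of the penalized formulation)**:
with `g` satisfying the PL inequality with constant `μ`, `f(φ, ·)` being `L`-Lipschitz,
and `γ ≥ L √(3μ/δ)`, any global minimizer `(φ_γ, θ_γ)` of the penalized objective
`F_γ = f + γ g` satisfies `ε_γ := g(θ_γ) - g* ≤ δ` and globally solves the constrained
problem `min f(φ,θ)  s.t.  g(θ) - g* ≤ ε_γ`. -/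
theorem penalized_global_min_solves_approx_bilevel
    {Φ Θ : Type*} [NormedAddCommGroup Φ] [InnerProductSpace ℝ Φ] [FiniteDimensional ℝ Φ]
    [NormedAddCommGroup Θ] [InnerProductSpace ℝ Θ] [FiniteDimensional ℝ Θ]
    (f : Φ × Θ → ℝ) (g : Θ → ℝ)
    (hf : Differentiable ℝ f) (hg : Differentiable ℝ g)
    (gstar : ℝ) (hglb : IsGLB (Set.range g) gstar) (hatt : ∃ θ₀ : Θ, g θ₀ = gstar)
    (μ : ℝ) (hμ : 0 < μ)
    (hPL : ∀ θ : Θ, ‖gradient g θ‖ ^ 2 ≥ (1 / μ) * (g θ - gstar))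
    (L : ℝ) (hL : 0 < L)
    (hfLip : ∀ (φ : Φ) (θ₁ θ₂ : Θ), |f (φ, θ₁) - f (φ, θ₂)| ≤ L * ‖θ₁ - θ₂‖)
    (δ : ℝ) (hδ : 0 < δ)
    (γ : ℝ) (hγ : γ ≥ L * Real.sqrt (3 * μ / δ))
    (Fγ : Φ × Θ → ℝ) (hFγ : ∀ p : Φ × Θ, Fγ p = f p + γ * g p.2)
    (φγ : Φ) (θγ : Θ) (hmin : ∀ p : Φ × Θ, Fγ (φγ, θγ) ≤ Fγ p) :
    g θγ - gstar ≤ δ ∧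
      ∀ (φ : Φ) (θ : Θ), g θ - gstar ≤ g θγ - gstar → f (φγ, θγ) ≤ f (φ, θ) := by
  have hsq : (0:ℝ) < 3 * μ / δ := by positivity
  have hγ0 : 0 < γ := lt_of_lt_of_le (by positivity) hγ
  have hdfφ : Differentiable ℝ (fun θ => f (φγ, θ)) :=
    hf.comp ((differentiable_const φγ).prodMk differentiable_id)
  constructor
  · -- part (a)
    have hlocal : IsLocalMin (fun θ => f (φγ, θ) + γ * g θ) θγ := by
      apply Filter.Eventually.of_forall
      intro θ
      have h1 := hmin (φγ, θ)
      rw [hFγ, hFγ] at h1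
      simpa using h1
    have hsum : HasFDerivAt (fun θ => f (φγ, θ) + γ * g θ)
        (fderiv ℝ (fun θ => f (φγ, θ)) θγ + γ • fderiv ℝ g θγ) θγ :=
      (hdfφ θγ).hasFDerivAt.add ((hg θγ).hasFDerivAt.const_mul γ)
    have h0 : fderiv ℝ (fun θ => f (φγ, θ) + γ * g θ) θγ = 0 := hlocal.fderiv_eq_zero
    have hadd : fderiv ℝ (fun θ => f (φγ, θ)) θγ + γ • fderiv ℝ g θγ = 0 := by
      rw [← hsum.fderiv]; exact h0
    have hneg : fderiv ℝ (fun θ => f (φγ, θ)) θγ = -(γ • fderiv ℝ g θγ) :=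
      eq_neg_of_add_eq_zero_left hadd
    have hlip : LipschitzWith (Real.toNNReal L) (fun θ => f (φγ, θ)) := by
      apply LipschitzWith.of_dist_le_mul
      intro θ₁ θ₂
      rw [Real.dist_eq, dist_eq_norm, Real.coe_toNNReal _ hL.le]
      exact hfLip φγ θ₁ θ₂
    have hbound : ‖fderiv ℝ (fun θ => f (φγ, θ)) θγ‖ ≤ L := by
      have := (hdfφ θγ).hasFDerivAt.le_of_lipschitz hlip
      rwa [Real.coe_toNNReal _ hL.le] at this
    have hnorm : γ * ‖fderiv ℝ g θγ‖ ≤ L := by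
      have heq : ‖fderiv ℝ (fun θ => f (φγ, θ)) θγ‖ = γ * ‖fderiv ℝ g θγ‖ := by
        rw [hneg, norm_neg, norm_smul, Real.norm_eq_abs, abs_of_pos hγ0]
      linarith [heq ▸ hbound]
    have hgradnorm : ‖gradient g θγ‖ = ‖fderiv ℝ g θγ‖ := by
      unfold gradient
      exact LinearIsometryEquiv.norm_map _ _
    exact penalized_aux_arith μ L δ γ ‖gradient g θγ‖ (g θγ - gstar) hμ hL hδ hγ0 hγ
      (norm_nonneg _) (by rw [hgradnorm]; exact hnorm) (hPL θγ)
  · intro φ θ hθ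
    have h1 : f (φγ, θγ) + γ * g θγ ≤ f (φ, θ) + γ * g θ := by
      simpa [hFγ] using hmin (φ, θ)
    have h2 : γ * g θ ≤ γ * g θγ := mul_le_mul_of_nonneg_left (by linarith) hγ0.le
    linarith
end

section
/- Let Φ and Θ be finite-dimensional real inner product spaces. Let f : Φ × Θ → ℝ and g : Θ → ℝ be differentiable, suppose g attains its infimum g* = inf_θ g(θ), suppose g satisfies the PL inequality with constant μ > 0 (‖∇g(θ)‖² ≥ (1/μ)(g(θ) - g*) for all θ), and suppose for every φ the map θ ↦ f(φ, θ) is L-Lipschitz (L > 0). Fix γ > 0 and set F_γ(φ, θ) = f(φ, θ) + γ g(θ). If (φ̂, θ̂) is a stationary point of F_γ (i.e., the total derivative of F_γ at (φ̂, θ̂) vanishes), then the lower-level suboptimality is bounded by g(θ̂) - g* ≤ μ L² / γ². -/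
/-- **Constraint-violation bound at stationary points of the penalized objective**
(key intermediate step in the proof of Lemma 1): if `g` satisfies the PL inequality
with constant `μ`, `f(φ, ·)` is `L`-Lipschitz for every `φ`, and `(φ̂, θ̂)` is a
stationary point of `F_γ = f + γ g` (its total derivative vanishes), then
`g(θ̂) - g* ≤ μ L² / γ²`. -/
theorem stationary_point_constraint_violation_bound
    {Φ Θ : Type*} [NormedAddCommGroup Φ] [InnerProductSpace ℝ Φ] [FiniteDimensional ℝ Φ]
    [NormedAddCommGroup Θ] [InnerProductSpace ℝ Θ] [FiniteDimensional ℝ Θ]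
    (f : Φ × Θ → ℝ) (g : Θ → ℝ)
    (hf : Differentiable ℝ f) (hg : Differentiable ℝ g)
    (gstar : ℝ) (hglb : IsGLB (Set.range g) gstar) (hatt : ∃ θ₀ : Θ, g θ₀ = gstar)
    (μ : ℝ) (hμ : 0 < μ)
    (hPL : ∀ θ : Θ, ‖gradient g θ‖ ^ 2 ≥ (1 / μ) * (g θ - gstar))
    (L : ℝ) (hL : 0 < L)
    (hfLip : ∀ (φ : Φ) (θ₁ θ₂ : Θ), |f (φ, θ₁) - f (φ, θ₂)| ≤ L * ‖θ₁ - θ₂‖)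
    (γ : ℝ) (hγ : 0 < γ)
    (Fγ : Φ × Θ → ℝ) (hFγ : ∀ p : Φ × Θ, Fγ p = f p + γ * g p.2)
    (φhat : Φ) (θhat : Θ) (hstat : fderiv ℝ Fγ (φhat, θhat) = 0) :
    g θhat - gstar ≤ μ * L ^ 2 / γ ^ 2 := by
  set h : Θ → ℝ := fun θ => f (φhat, θ) with hh_def
  have hhdiff : Differentiable ℝ h :=
    hf.comp ((differentiable_const φhat).prodMk differentiable_id)
  -- h is Lipschitz with constant L
  have hlip : LipschitzWith ⟨L, hL.le⟩ h := by
    apply LipschitzWith.of_dist_le_mul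
    intro θ₁ θ₂
    exact (by simpa [h, Real.dist_eq, dist_eq_norm] using hfLip φhat θ₁ θ₂ :
      dist (h θ₁) (h θ₂) ≤ L * dist θ₁ θ₂)
  have hnorm_h : ‖fderiv ℝ h θhat‖ ≤ L :=
    norm_fderiv_le_of_lipschitz ℝ hlip
  -- derivative of θ ↦ Fγ (φhat, θ) at θhat is 0
  have hFd : Differentiable ℝ Fγ := by
    have : Fγ = fun p => f p + γ * g p.2 := funext hFγ
    rw [this]
    exact hf.add ((hg.comp differentiable_snd).const_mul γ)
  have hinner : Differentiable ℝ (fun θ : Θ => ((φhat, θ) : Φ × Θ)) :=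
    (differentiable_const φhat).prodMk differentiable_id
  have hcomp : fderiv ℝ (fun θ => Fγ (φhat, θ)) θhat = 0 := by
    have := fderiv_comp (𝕜 := ℝ) θhat (hFd (φhat, θhat)) (hinner θhat)
    rw [show (fun θ => Fγ (φhat, θ)) = Fγ ∘ (fun θ : Θ => ((φhat, θ) : Φ × Θ)) from rfl,
      this, hstat]
    simp
  -- rewrite as derivative of h + γ g
  have heq : (fun θ => Fγ (φhat, θ)) = fun θ => h θ + γ * g θ := by
    funext θ; simpa using hFγ (φhat, θ)
  have hsum : fderiv ℝ h θhat + γ • fderiv ℝ g θhat = 0 := by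
    have := hcomp
    rw [heq] at this
    rw [fderiv_fun_add (hhdiff θhat) ((hg θhat).const_mul γ), fderiv_const_mul (hg θhat)] at this
    exact this
  have hgeq : γ • fderiv ℝ g θhat = -fderiv ℝ h θhat := by
    linear_combination (norm := abel_nf) hsum
  have hnorm_g : ‖fderiv ℝ g θhat‖ ≤ L / γ := by
    have h1 : γ * ‖fderiv ℝ g θhat‖ = ‖fderiv ℝ h θhat‖ := by
      have := congrArg norm hgeq
      rwa [norm_smul, norm_neg, Real.norm_eq_abs, abs_of_pos hγ] at this
    rw [le_div_iff₀ hγ, mul_comm, h1]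
    exact hnorm_h
  have hgrad : ‖gradient g θhat‖ = ‖fderiv ℝ g θhat‖ := by
    rw [gradient]
    exact LinearIsometryEquiv.norm_map _ _
  have hPLθ := hPL θhat
  rw [hgrad] at hPLθ
  have hsq : ‖fderiv ℝ g θhat‖ ^ 2 ≤ (L / γ) ^ 2 := by
    apply pow_le_pow_left₀ (norm_nonneg _) hnorm_g
  have : (1 / μ) * (g θhat - gstar) ≤ (L / γ) ^ 2 := le_trans hPLθ hsq
  have hμ' : (0:ℝ) < 1 / μ := by positivity
  calc g θhat - gstar ≤ μ * ((L / γ) ^ 2) := by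
        have h2 := mul_le_mul_of_nonneg_left this hμ.le
        rwa [← mul_assoc, mul_one_div, div_self hμ.ne', one_mul] at h2
    _ = μ * L ^ 2 / γ ^ 2 := by ring
end

section
/- Let Φ and Θ be finite-dimensional real inner product spaces. Let f : Φ × Θ → ℝ and g : Θ → ℝ be differentiable, with g* = inf_θ g(θ) attained, g satisfying the PL inequality with constant μ > 0 (‖∇g(θ)‖² ≥ (1/μ)(g(θ) - g*) for all θ), and θ ↦ f(φ, θ) L-Lipschitz for every φ (L > 0). Fix δ > 0, γ ≥ L √(3 μ / δ), and set F_γ(φ, θ) = f(φ, θ) + γ g(θ). Suppose F_γ has Lγ-Lipschitz gradient, F_γ is bounded below, 0 < β ≤ 1/Lγ, and the gradient-descent iterates z_{k+1} = z_k - β ∇F_γ(z_k) converge to a limit (φ*, θ*) that is a global minimizer of F_γ. Then (φ*, θ*) satisfies ∇F_γ(φ*, θ*) = 0, g(θ*) - g* ≤ δ, and f(φ*, θ*) ≤ f(φ, θ) for every (φ, θ) with g(θ) - g* ≤ g(θ*) - g*. -/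

private lemma blJust_aux {μ L γ δ N X : ℝ} (hμ : 0 < μ) (hL : 0 < L) (hδ : 0 < δ)
    (hγpos : 0 < γ) (hN0 : 0 ≤ N) (hNL : γ * N ≤ L)
    (hPL : (1 / μ) * X ≤ N ^ 2) (hγ2 : L ^ 2 * (3 * μ / δ) ≤ γ ^ 2) : X ≤ δ := by
  have hX : X ≤ μ * N ^ 2 := by
    have h := mul_le_mul_of_nonneg_left hPL hμ.le
    calc X = μ * ((1 / μ) * X) := by field_simp
      _ ≤ μ * N ^ 2 := h
  have hN2 : γ ^ 2 * N ^ 2 ≤ L ^ 2 := by nlinarith [mul_le_mul hNL hNL (by positivity) hL.le]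
  have hγ2' : L ^ 2 * (3 * μ) ≤ γ ^ 2 * δ := by
    have := mul_le_mul_of_nonneg_right hγ2 hδ.le
    calc L ^ 2 * (3 * μ) = L ^ 2 * (3 * μ / δ) * δ := by field_simp
      _ ≤ γ ^ 2 * δ := this
  nlinarith [mul_le_mul_of_nonneg_left hN2 hμ.le, sq_nonneg γ, sq_nonneg N,
    mul_le_mul_of_nonneg_left hX (sq_nonneg γ), mul_pos hμ (mul_pos hL hL),
    mul_le_mul_of_nonneg_right hX hδ.le]

/-- **Theorem 1(ii) combined with Lemma 1**: a convergent BL-JUST run (gradient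
descent on the penalized objective `F_γ = f + γ g` over the ℓ²-product space
`Φ ×₂ Θ`) whose limit `(φ*, θ*)` globally minimizes `F_γ` yields a stationary point
of `F_γ` that solves the approximate bilevel problem with accuracy `δ`:
`∇F_γ(φ*, θ*) = 0`, `g(θ*) - g* ≤ δ`, and `f(φ*, θ*) ≤ f(φ, θ)` for every `(φ, θ)`
with `g(θ) - g* ≤ g(θ*) - g*`. -/
theorem blJust_limit_solves_approx_bilevel
    {Φ Θ : Type*} [NormedAddCommGroup Φ] [InnerProductSpace ℝ Φ] [FiniteDimensional ℝ Φ]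
    [NormedAddCommGroup Θ] [InnerProductSpace ℝ Θ] [FiniteDimensional ℝ Θ]
    (f : Φ × Θ → ℝ) (g : Θ → ℝ)
    (hf : Differentiable ℝ f) (hg : Differentiable ℝ g)
    (gstar : ℝ) (hglb : IsGLB (Set.range g) gstar) (hatt : ∃ θ₀ : Θ, g θ₀ = gstar)
    (μ : ℝ) (hμ : 0 < μ)
    (hPL : ∀ θ : Θ, ‖gradient g θ‖ ^ 2 ≥ (1 / μ) * (g θ - gstar))
    (L : ℝ) (hL : 0 < L)
    (hfLip : ∀ (φ : Φ) (θ₁ θ₂ : Θ), |f (φ, θ₁) - f (φ, θ₂)| ≤ L * ‖θ₁ - θ₂‖)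
    (δ : ℝ) (hδ : 0 < δ)
    (γ : ℝ) (hγ : γ ≥ L * Real.sqrt (3 * μ / δ))
    (Fγ : WithLp 2 (Φ × Θ) → ℝ)
    (hFγ : ∀ w : WithLp 2 (Φ × Θ), Fγ w = f (w.ofLp.1, w.ofLp.2) + γ * g w.ofLp.2)
    (Lγ : ℝ) (hLγ : 0 < Lγ)
    (hLip : ∀ w v : WithLp 2 (Φ × Θ), ‖gradient Fγ w - gradient Fγ v‖ ≤ Lγ * ‖w - v‖)
    (C : ℝ) (hC : ∀ w : WithLp 2 (Φ × Θ), C ≤ Fγ w)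
    (β : ℝ) (hβ0 : 0 < β) (hβ : β ≤ 1 / Lγ)
    (z : ℕ → WithLp 2 (Φ × Θ))
    (hz : ∀ k : ℕ, z (k + 1) = z k - β • gradient Fγ (z k))
    (zstar : WithLp 2 (Φ × Θ))
    (hconv : Filter.Tendsto z Filter.atTop (nhds zstar))
    (hmin : ∀ w : WithLp 2 (Φ × Θ), Fγ zstar ≤ Fγ w) :
    gradient Fγ zstar = 0 ∧
      g zstar.ofLp.2 - gstar ≤ δ ∧
      ∀ (φ : Φ) (θ : Θ), g θ - gstar ≤ g zstar.ofLp.2 - gstar →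
        f (zstar.ofLp.1, zstar.ofLp.2) ≤ f (φ, θ) := by
  -- γ is positive
  have hsq : (0:ℝ) < Real.sqrt (3 * μ / δ) := Real.sqrt_pos.mpr (by positivity)
  have hγpos : 0 < γ := lt_of_lt_of_le (by positivity) hγ
  -- Part 1: gradient vanishes at the global minimizer
  have hloc : IsLocalMin Fγ zstar := Filter.Eventually.of_forall hmin
  have h1 : gradient Fγ zstar = 0 := by
    rw [gradient, hloc.fderiv_eq_zero, map_zero]
  refine ⟨h1, ?_, ?_⟩
  · -- Part 2 : g zstar.ofLp.2 - gstar ≤ δ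
    set h₁ : Θ → ℝ := fun θ => f (zstar.ofLp.1, θ) with hh₁
    have hd1 : Differentiable ℝ h₁ :=
      hf.comp (Differentiable.prodMk (differentiable_const _) differentiable_id)
    set h : Θ → ℝ := fun θ => h₁ θ + γ * g θ with hh
    have hhmin : IsLocalMin h zstar.ofLp.2 := by
      refine Filter.Eventually.of_forall fun θ => ?_
      have := hmin ((WithLp.equiv 2 (Φ × Θ)).symm (zstar.ofLp.1, θ))
      rw [hFγ, hFγ] at this
      exact this
    have hfd : fderiv ℝ h zstar.ofLp.2 = 0 := hhmin.fderiv_eq_zero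
    have hadd : fderiv ℝ h zstar.ofLp.2 =
        fderiv ℝ h₁ zstar.ofLp.2 + γ • fderiv ℝ g zstar.ofLp.2 := by
      rw [hh]
      rw [fderiv_fun_add (hd1 zstar.ofLp.2) ((hg zstar.ofLp.2).const_mul γ),
        fderiv_const_mul (hg zstar.ofLp.2)]
    have hkey : γ • fderiv ℝ g zstar.ofLp.2 = -fderiv ℝ h₁ zstar.ofLp.2 := by
      rw [hadd] at hfd; linear_combination (norm := abel) hfd
    -- Lipschitz bound on fderiv of h₁
    have hlip : LipschitzWith L.toNNReal h₁ := by
      refine LipschitzWith.of_dist_le_mul fun a b => ?_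
      rw [Real.dist_eq, dist_eq_norm, Real.coe_toNNReal _ hL.le]
      exact hfLip zstar.ofLp.1 a b
    have hnorm1 : ‖fderiv ℝ h₁ zstar.ofLp.2‖ ≤ L := by
      have := norm_fderiv_le_of_lipschitz ℝ hlip (x₀ := zstar.ofLp.2)
      rwa [Real.coe_toNNReal _ hL.le] at this
    have hγg : γ * ‖fderiv ℝ g zstar.ofLp.2‖ ≤ L := by
      have : ‖γ • fderiv ℝ g zstar.ofLp.2‖ ≤ L := by rw [hkey, norm_neg]; exact hnorm1
      rwa [norm_smul, Real.norm_eq_abs, abs_of_pos hγpos] at this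
    have hgradnorm : ‖gradient g zstar.ofLp.2‖ = ‖fderiv ℝ g zstar.ofLp.2‖ := by
      rw [gradient, LinearIsometryEquiv.norm_map]
    have hNL : γ * ‖gradient g zstar.ofLp.2‖ ≤ L := by rw [hgradnorm]; exact hγg
    have hγ2 : L ^ 2 * (3 * μ / δ) ≤ γ ^ 2 := by
      have h2 : (L * Real.sqrt (3 * μ / δ)) ^ 2 ≤ γ ^ 2 :=
        pow_le_pow_left₀ (by positivity) hγ 2
      rwa [mul_pow, Real.sq_sqrt (by positivity)] at h2
    exact blJust_aux hμ hL hδ hγpos (norm_nonneg _) hNL (hPL zstar.ofLp.2) hγ2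
  · -- Part 3: bilevel optimality
    intro φ θ hθ
    have hgle : g θ ≤ g zstar.ofLp.2 := by linarith
    have := hmin ((WithLp.equiv 2 (Φ × Θ)).symm (φ, θ))
    rw [hFγ, hFγ] at this
    have h2 : γ * g θ ≤ γ * g zstar.ofLp.2 := mul_le_mul_of_nonneg_left hgle hγpos.le
    simp only [WithLp.equiv_symm_apply, WithLp.ofLp_toLp] at this
    linarith [this]
end
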